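/- As A → 0⁺, the normalized equilibrium measures μ_A with density proportional to exp(-(2/A²)(β|v|⁴/4 - α|v|²/2)) on ℝ² converge weakly to the uniform probability measure on the circle {|v| = √(α/β)}. -/

import Mathlib

open Real MeasureTheory

/-- A point on the circle of radius `√(α/β)` at angle `θ`. -/
noncomputable def circPt (α β θ : ℝ) : EuclideanSpace ℝ (Fin 2) :=
  WithLp.toLp 2 (fun i : Fin 2 => if i = 0 then Real.sqrt (α / β) * Real.cos θ else Real.sqrt (α / β) * Real.sin θ)

open Real MeasureTheory Filter Set Topology

section LaplaceAux

variable {α β : ℝ}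

noncomputable def qf (α β s : ℝ) : ℝ := β / 4 * (s - α / β) ^ 2

noncomputable def wf (α β ε : ℝ) (z : ℂ) : ℝ := Real.exp (-qf α β (‖z‖ ^ 2) / ε)

lemma qf_nonneg {α β : ℝ} (hβ : 0 < β) (s : ℝ) : 0 ≤ qf α β s := by
  unfold qf; positivity

lemma wf_pos {α β ε : ℝ} (z : ℂ) : 0 < wf α β ε z := Real.exp_pos _

lemma wf_continuous (α β ε : ℝ) : Continuous (wf α β ε) := by
  unfold wf qf; fun_prop

lemma gauss_int {b : ℝ} (hb : 0 < b) : Integrable (fun z : ℂ => Real.exp (-b * ‖z‖ ^ 2)) := by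
  have h := (GaussianFourier.integrable_cexp_neg_mul_sq_norm_add (V := ℂ) (b := (b : ℂ))
    (by simpa using hb) 0 0).norm
  refine h.congr (Eventually.of_forall fun z => ?_)
  simp only [Complex.norm_exp]
  congr 1
  have : (-(b:ℂ) * ((‖z‖ : ℝ) : ℂ) ^ 2 + 0 * ((inner ℝ (0:ℂ) z : ℝ) : ℂ)) = ((-b * ‖z‖ ^ 2 : ℝ) : ℂ) := by
    push_cast; ring
  rw [this, Complex.ofReal_re]

lemma integrable_exp_qf {α β : ℝ} (hα : 0 < α) (hβ : 0 < β) {lam : ℝ} (hlam : 0 < lam) :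
    Integrable (fun z : ℂ => Real.exp (-qf α β (‖z‖ ^ 2) / lam)) := by
  have key : ∀ s : ℝ, s - (α + 1) / β ≤ qf α β s := by
    intro s
    have hid : qf α β s - (s - (α + 1) / β) = β / 4 * (s - α / β - 2 / β) ^ 2 := by
      unfold qf; field_simp; ring
    nlinarith [sq_nonneg (s - α / β - 2 / β), mul_pos hβ hβ, hid,
      mul_nonneg hβ.le (sq_nonneg (s - α / β - 2 / β))]
  refine Integrable.mono' ((gauss_int (b := 1 / lam) (by positivity)).const_mul
    (Real.exp ((α + 1) / β / lam))) ?_ (Eventually.of_forall fun z => ?_)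
  · exact ((wf_continuous α β lam).aestronglyMeasurable)
  · rw [Real.norm_eq_abs, abs_of_pos (Real.exp_pos _), ← Real.exp_add]
    apply Real.exp_le_exp.2
    have h2 : -qf α β (‖z‖ ^ 2) ≤ (α + 1) / β - ‖z‖ ^ 2 := by linarith [key (‖z‖ ^ 2)]
    calc -qf α β (‖z‖ ^ 2) / lam ≤ ((α + 1) / β - ‖z‖ ^ 2) / lam := by gcongr
      _ = (α + 1) / β / lam + -(1 / lam) * ‖z‖ ^ 2 := by ring

lemma integrable_wf {α β : ℝ} (hα : 0 < α) (hβ : 0 < β) {ε : ℝ} (hε : 0 < ε) :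
    Integrable (wf α β ε) := integrable_exp_qf hα hβ hε

lemma integrable_mul_wf {α β : ℝ} (hα : 0 < α) (hβ : 0 < β) {ε : ℝ} (hε : 0 < ε)
    {G : ℂ → ℝ} (hG : Continuous G) {C : ℝ} (hC : ∀ z, |G z| ≤ C) :
    Integrable (fun z => G z * wf α β ε z) := by
  refine Integrable.mono' ((integrable_wf hα hβ hε).const_mul C) ?_
    (Eventually.of_forall fun z => ?_)
  · exact (hG.mul (wf_continuous α β ε)).aestronglyMeasurable
  · rw [Real.norm_eq_abs, abs_mul, abs_of_pos (wf_pos z)]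
    exact mul_le_mul_of_nonneg_right (hC z) (wf_pos z).le

lemma wf_integral_pos {α β : ℝ} (hα : 0 < α) (hβ : 0 < β) {ε : ℝ} (hε : 0 < ε) :
    0 < ∫ z : ℂ, wf α β ε z := by
  rw [integral_pos_iff_support_of_nonneg (fun z => (wf_pos z).le) (integrable_wf hα hβ hε)]
  have : Function.support (wf α β ε) = univ := by
    ext z; simp [Function.mem_support, (wf_pos (α := α) (β := β) (ε := ε) z).ne']
  rw [this]
  simp [NeZero.ne (volume : Measure ℂ)]

lemma conc (hα : 0 < α) (hβ : 0 < β) {δ : ℝ} (hδ : 0 < δ) :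
    Tendsto (fun ε => (∫ z : ℂ, wf α β ε z)⁻¹ *
      ∫ z in {z : ℂ | δ ≤ |‖z‖ ^ 2 - α / β|}, wf α β ε z) (𝓝[>] (0 : ℝ)) (𝓝 0) := by
  set S : Set ℂ := {z : ℂ | δ ≤ |‖z‖ ^ 2 - α / β|} with hS
  have hSmeas : MeasurableSet S :=
    (isClosed_le continuous_const ((continuous_norm.pow 2).sub continuous_const).abs).measurableSet
  set c : ℝ := β / 4 * δ ^ 2 with hc
  have hcpos : 0 < c := by positivity
  set I0 : ℝ := ∫ z : ℂ, wf α β 1 z with hI0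
  have hI0pos : 0 < I0 := wf_integral_pos hα hβ one_pos
  set U : Set ℂ := {z : ℂ | |‖z‖ ^ 2 - α / β| < δ / 2} with hU
  have hUopen : IsOpen U :=
    isOpen_lt ((continuous_norm.pow 2).sub continuous_const).abs continuous_const
  have hUne : U.Nonempty := by
    refine ⟨(Real.sqrt (α / β) : ℂ), ?_⟩
    have : ‖((Real.sqrt (α / β) : ℝ) : ℂ)‖ ^ 2 = α / β := by
      rw [Complex.norm_real, Real.norm_eq_abs, sq_abs, Real.sq_sqrt (by positivity)]
    simp only [hU, mem_setOf_eq, this, sub_self, abs_zero]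
    positivity
  have hUfin : volume U < ⊤ := by
    have hsub : U ⊆ Metric.closedBall (0 : ℂ) (Real.sqrt (α / β + δ / 2)) := by
      intro z hz
      simp only [hU, mem_setOf_eq, abs_lt] at hz
      rw [Metric.mem_closedBall, dist_zero_right]
      rw [show (Real.sqrt (α / β + δ / 2)) = Real.sqrt (α / β + δ / 2) from rfl]
      have h1 : ‖z‖ ^ 2 ≤ α / β + δ / 2 := by linarith [hz.2]
      nlinarith [Real.sq_sqrt (show (0:ℝ) ≤ α / β + δ / 2 by positivity), norm_nonneg z,
        Real.sqrt_nonneg (α / β + δ / 2)]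
    exact (measure_mono hsub).trans_lt (measure_closedBall_lt_top)
  set V : ℝ := (volume U).toReal with hV
  have hVpos : 0 < V := by
    rw [hV, ENNReal.toReal_pos_iff]
    exact ⟨hUopen.measure_pos volume hUne, hUfin⟩
  -- pointwise bounds
  have qS : ∀ z ∈ S, c ≤ qf α β (‖z‖ ^ 2) := by
    intro z hz
    rw [hS, mem_setOf_eq] at hz
    have h2 : δ ^ 2 ≤ (‖z‖ ^ 2 - α / β) ^ 2 := by
      rw [← sq_abs (‖z‖ ^ 2 - α / β)]; exact pow_le_pow_left₀ hδ.le hz 2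
    rw [hc]; unfold qf; nlinarith
  have qU : ∀ z ∈ U, qf α β (‖z‖ ^ 2) ≤ c / 4 := by
    intro z hz
    rw [hU, mem_setOf_eq] at hz
    have h2 : (‖z‖ ^ 2 - α / β) ^ 2 ≤ (δ / 2) ^ 2 := by
      rw [← sq_abs (‖z‖ ^ 2 - α / β)]
      exact pow_le_pow_left₀ (abs_nonneg _) hz.le 2
    rw [hc]; unfold qf; nlinarith
  -- The key eventual bound
  have key : ∀ ε ∈ Ioc (0:ℝ) 1,
      (∫ z : ℂ, wf α β ε z)⁻¹ * ∫ z in S, wf α β ε z ≤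
        (I0 * Real.exp c / V) * Real.exp (-(3 * c / 4) * ε⁻¹) := by
    intro ε hε
    obtain ⟨hε0, hε1⟩ := hε
    have hnum : ∫ z in S, wf α β ε z ≤ Real.exp (-c * (1/ε - 1)) * I0 := by
      have hpt : ∀ z ∈ S, wf α β ε z ≤ Real.exp (-c * (1/ε - 1)) * wf α β 1 z := by
        intro z hz
        unfold wf
        rw [← Real.exp_add]
        apply Real.exp_le_exp.2
        have hq := qS z hz
        have hqc : 0 ≤ qf α β (‖z‖ ^ 2) - c := by linarith
        have h1ε : 1 ≤ 1/ε := by rw [le_div_iff₀ hε0]; linarith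
        rw [div_eq_mul_inv, div_one, ← one_div]
        nlinarith [mul_nonneg hqc (by linarith : (0:ℝ) ≤ 1/ε - 1)]
      calc ∫ z in S, wf α β ε z
          ≤ ∫ z in S, Real.exp (-c * (1/ε - 1)) * wf α β 1 z := by
            apply setIntegral_mono_on ((integrable_wf hα hβ hε0).integrableOn)
              (((integrable_wf hα hβ one_pos).const_mul _).integrableOn) hSmeas hpt
        _ ≤ ∫ z : ℂ, Real.exp (-c * (1/ε - 1)) * wf α β 1 z := by
            apply setIntegral_le_integral ((integrable_wf hα hβ one_pos).const_mul _)
            exact Eventually.of_forall fun z => mul_nonneg (Real.exp_pos _).le (wf_pos _).le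
        _ = Real.exp (-c * (1/ε - 1)) * I0 := by rw [integral_const_mul, hI0]
    have hden : Real.exp (-(c/4) / ε) * V ≤ ∫ z : ℂ, wf α β ε z := by
      have h1 : Real.exp (-(c/4) / ε) * V ≤ ∫ z in U, wf α β ε z := by
        apply setIntegral_ge_of_const_le_real hUopen.measurableSet hUfin.ne
        · intro z hz
          unfold wf
          apply Real.exp_le_exp.2
          have := qU z hz
          have h2 : -(c/4) ≤ -qf α β (‖z‖ ^ 2) := by linarith [qU z hz]
          gcongr
        · exact (integrable_wf hα hβ hε0).integrableOn
      refine h1.trans (setIntegral_le_integral (integrable_wf hα hβ hε0) ?_)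
      exact Eventually.of_forall fun z => (wf_pos z).le
    have hD : 0 < ∫ z : ℂ, wf α β ε z := wf_integral_pos hα hβ hε0
    have hnum0 : 0 ≤ ∫ z in S, wf α β ε z :=
      setIntegral_nonneg hSmeas fun z _ => (wf_pos z).le
    have hdpos : 0 < Real.exp (-(c/4) / ε) * V := by positivity
    calc (∫ z : ℂ, wf α β ε z)⁻¹ * ∫ z in S, wf α β ε z
        ≤ (Real.exp (-(c/4) / ε) * V)⁻¹ * (Real.exp (-c * (1/ε - 1)) * I0) :=
          mul_le_mul (inv_anti₀ hdpos hden) hnum hnum0 (by positivity)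
      _ = (Real.exp ((c/4)/ε) * Real.exp (-c * (1/ε - 1))) * (I0 / V) := by
          rw [mul_inv, ← Real.exp_neg, neg_div, neg_neg]; ring
      _ = (I0 * Real.exp c / V) * Real.exp (-(3 * c / 4) * ε⁻¹) := by
          rw [← Real.exp_add]
          have heq : (c/4)/ε + (-c * (1/ε - 1)) = c + (-(3 * c / 4) * ε⁻¹) := by
            field_simp; ring
          rw [heq, Real.exp_add]; ring
  have hmem : Ioc (0:ℝ) 1 ∈ 𝓝[>] (0:ℝ) := Ioc_mem_nhdsGT_of_mem ⟨le_rfl, one_pos⟩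
  have hb : Tendsto (fun ε : ℝ => (I0 * Real.exp c / V) * Real.exp (-(3 * c / 4) * ε⁻¹))
      (𝓝[>] (0:ℝ)) (𝓝 0) := by
    have h1 : Tendsto (fun ε : ℝ => (3 * c / 4) * ε⁻¹) (𝓝[>] (0:ℝ)) atTop :=
      tendsto_inv_nhdsGT_zero.const_mul_atTop (by positivity)
    have h2 : Tendsto (fun ε : ℝ => Real.exp (-((3 * c / 4) * ε⁻¹))) (𝓝[>] (0:ℝ)) (𝓝 0) :=
      Real.tendsto_exp_neg_atTop_nhds_zero.comp h1
    have h3 := h2.const_mul (I0 * Real.exp c / V)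
    simpa [neg_mul] using h3
  refine squeeze_zero' ?_ ?_ hb
  · filter_upwards [self_mem_nhdsWithin] with ε hε
    exact mul_nonneg (inv_nonneg.2 (wf_integral_pos hα hβ (mem_Ioi.1 hε)).le)
      (setIntegral_nonneg hSmeas fun z _ => (wf_pos z).le)
  · filter_upwards [hmem] with ε hε using key ε hε

noncomputable def Hf (G : ℂ → ℝ) (r : ℝ) : ℝ :=
  (2 * π)⁻¹ * ∫ θ in (0:ℝ)..(2 * π), G ((r : ℂ) * Complex.exp (θ * Complex.I))

lemma Hf_abs_le {G : ℂ → ℝ} {C : ℝ} (hC : ∀ z, |G z| ≤ C) (r : ℝ) : |Hf G r| ≤ C := by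
  have hC0 : 0 ≤ C := (abs_nonneg _).trans (hC 0)
  have h1 : |∫ θ in (0:ℝ)..(2 * π), G ((r : ℂ) * Complex.exp (θ * Complex.I))| ≤ C * |2 * π - 0| := by
    rw [← Real.norm_eq_abs]
    exact intervalIntegral.norm_integral_le_of_norm_le_const fun θ _ => (hC _).trans le_rfl
  unfold Hf
  rw [abs_mul, abs_inv, abs_of_pos (by positivity : (0:ℝ) < 2 * π)]
  rw [sub_zero, abs_of_pos (by positivity : (0:ℝ) < 2 * π)] at h1
  rw [inv_mul_le_iff₀ (by positivity)]
  linarith [h1]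

lemma Hf_continuous {G : ℂ → ℝ} (hG : Continuous G) : Continuous (Hf G) := by
  apply continuous_const.mul
  apply intervalIntegral.continuous_parametric_intervalIntegral_of_continuous' (μ := volume)
  fun_prop

lemma rot_inv (ε θ : ℝ) (G : ℂ → ℝ) :
    ∫ z : ℂ, G (Complex.exp (θ * Complex.I) * z) * wf α β ε z
      = ∫ z : ℂ, G z * wf α β ε z := by
  set R := rotation (Circle.exp θ) with hR
  have mp : MeasurePreserving (R : ℂ → ℂ) volume volume := R.measurePreserving
  have h := mp.integral_comp R.toMeasurableEquiv.measurableEmbedding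
    (fun z => G z * wf α β ε z)
  rw [← h]
  apply integral_congr_ae
  filter_upwards with z
  have h1 : (R : ℂ → ℂ) z = Complex.exp (θ * Complex.I) * z := by
    simp [hR, rotation_apply, Circle.coe_exp]
  have h2 : wf α β ε (R z) = wf α β ε z := by unfold wf; rw [R.norm_map]
  rw [h1] at h2 ⊢
  rw [h2]

lemma rot_avg (hα : 0 < α) (hβ : 0 < β) {ε : ℝ} (hε : 0 < ε)
    {G : ℂ → ℝ} (hG : Continuous G) {C : ℝ} (hC : ∀ z, |G z| ≤ C) :
    ∫ z : ℂ, G z * wf α β ε z = ∫ z : ℂ, Hf G ‖z‖ * wf α β ε z := by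
  set μ : Measure ℝ := volume.restrict (Ioc (0:ℝ) (2 * π)) with hμ
  set F : ℝ → ℂ → ℝ := fun θ z => G (Complex.exp (θ * Complex.I) * z) * wf α β ε z with hF
  have hFcont : Continuous (Function.uncurry F) := by
    apply Continuous.mul
    · exact hG.comp ((Complex.continuous_exp.comp
        ((Complex.continuous_ofReal.comp continuous_fst).mul continuous_const)).mul
        continuous_snd)
    · exact (wf_continuous α β ε).comp continuous_snd
  have hμfin : IsFiniteMeasure μ := by
    constructor
    rw [hμ, Measure.restrict_apply_univ, Real.volume_Ioc]
    exact ENNReal.ofReal_lt_top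
  have hconst : Integrable (fun _ : ℝ => C) μ := by
    rw [hμ]
    exact integrableOn_const (by rw [Real.volume_Ioc]; exact ENNReal.ofReal_ne_top)
  have hbound : Integrable (fun p : ℝ × ℂ => C * wf α β ε p.2) (μ.prod volume) :=
    Integrable.mul_prod hconst (integrable_wf hα hβ hε)
  have hFint : Integrable (Function.uncurry F) (μ.prod volume) := by
    refine hbound.mono' hFcont.aestronglyMeasurable (Eventually.of_forall fun p => ?_)
    rw [Real.norm_eq_abs, hF, Function.uncurry, abs_mul, abs_of_pos (wf_pos _)]
    exact mul_le_mul_of_nonneg_right (hC _) (wf_pos _).le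
  -- step 1 : iterated integral θ then z is constant
  have step1 : ∫ θ, (∫ z : ℂ, F θ z) ∂μ = (2 * π) * ∫ z : ℂ, G z * wf α β ε z := by
    have : ∀ θ, (∫ z : ℂ, F θ z) = ∫ z : ℂ, G z * wf α β ε z := fun θ => rot_inv ε θ G
    simp_rw [this]
    rw [integral_const]
    rw [hμ, measureReal_restrict_apply_univ, measureReal_def, Real.volume_Ioc, sub_zero,
      ENNReal.toReal_ofReal (by positivity), smul_eq_mul]
  -- step 2 : swap
  have step2 : ∫ θ, (∫ z : ℂ, F θ z) ∂μ = ∫ z : ℂ, (∫ θ, F θ z ∂μ) := by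
    exact integral_integral_swap hFint
  -- step 3 : inner integral is 2π * Hf G ‖z‖ for a.e. z
  have step3 : ∀ᵐ z : ℂ, (∫ θ, F θ z ∂μ) = (2 * π) * (Hf G ‖z‖ * wf α β ε z) := by
    have hz0 : ∀ᵐ z : ℂ, z ≠ 0 := by
      rw [ae_iff]
      have hset : {z : ℂ | ¬z ≠ 0} = {0} := by ext z; simp
      rw [hset]
      exact measure_singleton 0
    filter_upwards [hz0] with z hz
    have habs : (↑‖z‖ : ℂ) * Complex.exp (↑(Complex.arg z) * Complex.I) = z :=
      Complex.norm_mul_exp_arg_mul_I z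
    set k : ℝ → ℝ := fun t => G ((‖z‖ : ℂ) * Complex.exp (↑t * Complex.I)) with hk
    have hper : Function.Periodic k (2 * π) := by
      intro t
      simp only [hk]
      congr 2
      push_cast
      rw [add_mul, Complex.exp_add, Complex.exp_two_pi_mul_I, mul_one]
    have hpt : ∀ θ : ℝ, G (Complex.exp (θ * Complex.I) * z) = k (θ + Complex.arg z) := by
      intro θ
      simp only [hk]
      congr 1
      conv_lhs => rw [← habs]
      push_cast
      rw [add_mul, Complex.exp_add]
      ring
    have hke : Continuous k := hG.comp (continuous_const.mul
      (Complex.continuous_exp.comp (Complex.continuous_ofReal.mul continuous_const)))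
    calc (∫ θ, F θ z ∂μ)
        = (∫ θ, G (Complex.exp (θ * Complex.I) * z) ∂μ) * wf α β ε z := by
          rw [hF]; exact integral_mul_const _ _
      _ = (∫ θ in (0:ℝ)..(2*π), k (θ + Complex.arg z)) * wf α β ε z := by
          congr 1
          rw [intervalIntegral.integral_of_le (by positivity), hμ]
          apply integral_congr_ae
          filter_upwards with θ
          rw [hpt θ]
      _ = (∫ θ in (0:ℝ)..(2*π), k θ) * wf α β ε z := by
          congr 1
          rw [intervalIntegral.integral_comp_add_right k (Complex.arg z)]
          have h2 := hper.intervalIntegral_add_eq (Complex.arg z) 0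
          rw [zero_add] at h2
          rw [zero_add, show (2 * π + Complex.arg z) = Complex.arg z + 2 * π by ring]
          exact h2
      _ = (2 * π) * (Hf G ‖z‖ * wf α β ε z) := by
          unfold Hf
          rw [hk]
          rw [← mul_assoc, ← mul_assoc, mul_inv_cancel₀ (by positivity : (2 * π : ℝ) ≠ 0), one_mul]
  have step4 : ∫ z : ℂ, (∫ θ, F θ z ∂μ) = (2 * π) * ∫ z : ℂ, Hf G ‖z‖ * wf α β ε z := by
    rw [integral_congr_ae step3, MeasureTheory.integral_const_mul]
  have h2π : (2 * π : ℝ) ≠ 0 := by positivity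
  apply mul_left_cancel₀ h2π
  rw [← step1, step2, step4]

lemma main_eps (hα : 0 < α) (hβ : 0 < β) {G : ℂ → ℝ} (hG : Continuous G)
    {C : ℝ} (hC : ∀ z, |G z| ≤ C) :
    Tendsto (fun ε => (∫ z : ℂ, wf α β ε z)⁻¹ * ∫ z : ℂ, G z * wf α β ε z)
      (𝓝[>] (0:ℝ)) (𝓝 (Hf G (Real.sqrt (α / β)))) := by
  set r0 := Real.sqrt (α / β) with hr0def
  have hr0 : 0 < r0 := Real.sqrt_pos.2 (by positivity)
  have hr0sq : r0 ^ 2 = α / β := Real.sq_sqrt (by positivity)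
  set T := Hf G r0 with hT
  rw [Metric.tendsto_nhds]
  intro η hη
  obtain ⟨δ₁, hδ₁pos, hδ₁⟩ : ∃ δ₁ > 0, ∀ r : ℝ, |r - r0| < δ₁ → |Hf G r - T| ≤ η / 4 := by
    have hcont := (Hf_continuous hG).continuousAt (x := r0)
    rw [Metric.continuousAt_iff] at hcont
    obtain ⟨δ₁, h1, h2⟩ := hcont (η / 4) (by positivity)
    refine ⟨δ₁, h1, fun r hr => ?_⟩
    have := h2 (show dist r r0 < δ₁ by rwa [Real.dist_eq])
    rw [Real.dist_eq] at this
    exact this.le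
  set δ := δ₁ * r0 with hδdef
  have hδpos : 0 < δ := by positivity
  have hC0 : 0 ≤ C := (abs_nonneg _).trans (hC 0)
  set C' := C + |T| + 1 with hC'
  have hC'pos : 0 < C' := by positivity
  have hev := (Metric.tendsto_nhds.1 (conc hα hβ hδpos)) (η / (4 * C')) (by positivity)
  filter_upwards [hev, self_mem_nhdsWithin] with ε hev1 hεmem
  have hε : 0 < ε := hεmem
  set S := {z : ℂ | δ ≤ |‖z‖ ^ 2 - α / β|} with hSdef
  have hSmeas : MeasurableSet S :=
    (isClosed_le continuous_const ((continuous_norm.pow 2).sub continuous_const).abs).measurableSet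
  set D := ∫ z : ℂ, wf α β ε z with hD
  have hDpos : 0 < D := wf_integral_pos hα hβ hε
  set h : ℂ → ℝ := fun z => Hf G ‖z‖ with hh
  have hhcont : Continuous h := (Hf_continuous hG).comp continuous_norm
  have hhb : ∀ z, |h z| ≤ C := fun z => Hf_abs_le hC _
  have hsubcont : Continuous (fun z => h z - T) := hhcont.sub continuous_const
  have hsubb : ∀ z, |h z - T| ≤ C' := fun z => by
    calc |h z - T| ≤ |h z| + |T| := abs_sub _ _
      _ ≤ C + |T| := by linarith [hhb z]
      _ ≤ C' := by rw [hC']; linarith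
  have hint_hw : Integrable (fun z => h z * wf α β ε z) := integrable_mul_wf hα hβ hε hhcont hhb
  have hint_sw : Integrable (fun z => (h z - T) * wf α β ε z) :=
    integrable_mul_wf hα hβ hε hsubcont hsubb
  have hintw : Integrable (wf α β ε) := integrable_wf hα hβ hε
  -- numerator identity
  have hNum : ∫ z : ℂ, G z * wf α β ε z = ∫ z : ℂ, h z * wf α β ε z := rot_avg hα hβ hε hG hC
  have hsplit : ∫ z : ℂ, (h z - T) * wf α β ε z
      = (∫ z in S, (h z - T) * wf α β ε z) + ∫ z in Sᶜ, (h z - T) * wf α β ε z :=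
    (integral_add_compl hSmeas hint_sw).symm
  -- bound on S (outside)
  have hBS : |∫ z in S, (h z - T) * wf α β ε z| ≤ C' * ∫ z in S, wf α β ε z := by
    calc |∫ z in S, (h z - T) * wf α β ε z| ≤ ∫ z in S, |(h z - T) * wf α β ε z| := by
          rw [← Real.norm_eq_abs]
          exact (norm_integral_le_integral_norm _).trans
            (le_of_eq (by simp [Real.norm_eq_abs, abs_mul]))
      _ ≤ ∫ z in S, C' * wf α β ε z := by
          apply setIntegral_mono_on (hint_sw.abs.integrableOn)
            ((hintw.const_mul C').integrableOn) hSmeas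
          intro z _
          rw [abs_mul, abs_of_pos (wf_pos _)]
          exact mul_le_mul_of_nonneg_right (hsubb z) (wf_pos _).le
      _ = C' * ∫ z in S, wf α β ε z := MeasureTheory.integral_const_mul _ _
  -- bound on Sᶜ (annulus)
  have hBA : |∫ z in Sᶜ, (h z - T) * wf α β ε z| ≤ (η / 4) * D := by
    have hpt : ∀ z ∈ Sᶜ, |(h z - T) * wf α β ε z| ≤ (η / 4) * wf α β ε z := by
      intro z hz
      rw [hSdef, mem_compl_iff, mem_setOf_eq, not_le] at hz
      have hr : |‖z‖ - r0| < δ₁ := by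
        have h3 : |‖z‖ - r0| * (‖z‖ + r0) = |‖z‖ ^ 2 - α / β| := by
          rw [← hr0sq, ← abs_of_pos (show (0:ℝ) < ‖z‖ + r0 by positivity), ← abs_mul]
          congr 1; ring
        nlinarith [norm_nonneg z, abs_nonneg (‖z‖ - r0)]
      have := hδ₁ _ hr
      rw [abs_mul, abs_of_pos (wf_pos _)]
      exact mul_le_mul_of_nonneg_right this (wf_pos _).le
    calc |∫ z in Sᶜ, (h z - T) * wf α β ε z| ≤ ∫ z in Sᶜ, |(h z - T) * wf α β ε z| := by
          rw [← Real.norm_eq_abs]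
          exact (norm_integral_le_integral_norm _).trans
            (le_of_eq (by simp [Real.norm_eq_abs, abs_mul]))
      _ ≤ ∫ z in Sᶜ, (η / 4) * wf α β ε z := by
          apply setIntegral_mono_on (hint_sw.abs.integrableOn)
            ((hintw.const_mul _).integrableOn) hSmeas.compl hpt
      _ = (η / 4) * ∫ z in Sᶜ, wf α β ε z := MeasureTheory.integral_const_mul _ _
      _ ≤ (η / 4) * D := by
          apply mul_le_mul_of_nonneg_left _ (by positivity)
          exact setIntegral_le_integral hintw (Eventually.of_forall fun z => (wf_pos z).le)
  -- the outside mass is small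
  have houtS : C' * ((∫ z : ℂ, wf α β ε z)⁻¹ * ∫ z in S, wf α β ε z) < C' * (η / (4 * C')) := by
    apply mul_lt_mul_of_pos_left _ hC'pos
    have := hev1
    rw [Real.dist_eq, sub_zero] at this
    exact lt_of_abs_lt this
  -- final computation
  have hkey : D⁻¹ * (∫ z : ℂ, G z * wf α β ε z) - T = D⁻¹ * ∫ z : ℂ, (h z - T) * wf α β ε z := by
    have : ∫ z : ℂ, (h z - T) * wf α β ε z
        = (∫ z : ℂ, h z * wf α β ε z) - T * D := by
      rw [hD, ← MeasureTheory.integral_const_mul T]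
      rw [← integral_sub hint_hw (hintw.const_mul T)]
      congr 1; funext z; ring
    rw [this, hNum, mul_sub]
    congr 1
    field_simp
  rw [Real.dist_eq, hkey]
  calc |D⁻¹ * ∫ z : ℂ, (h z - T) * wf α β ε z|
      ≤ D⁻¹ * (C' * (∫ z in S, wf α β ε z) + (η / 4) * D) := by
        rw [abs_mul, abs_of_pos (by positivity : (0:ℝ) < D⁻¹)]
        apply mul_le_mul_of_nonneg_left _ (by positivity)
        rw [hsplit]
        exact (abs_add_le _ _).trans (add_le_add hBS hBA)
    _ = C' * (D⁻¹ * ∫ z in S, wf α β ε z) + η / 4 := by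
        rw [mul_add]
        congr 1
        · ring
        · field_simp
    _ < C' * (η / (4 * C')) + η / 4 := by
        apply add_lt_add_of_lt_of_le _ le_rfl
        exact houtS
    _ ≤ η / 4 + η / 4 := by
        refine add_le_add ?_ le_rfl
        rw [mul_div_assoc']
        rw [div_le_div_iff₀ (by positivity) (by positivity)]
        ring_nf
        nlinarith [hC'pos, hη]
    _ < η := by linarith

end LaplaceAux

lemma circPt_eq (α β θ : ℝ) : circPt α β θ =
    Complex.orthonormalBasisOneI.repr ((Real.sqrt (α / β) : ℂ) * Complex.exp (θ * Complex.I)) := by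
  ext i
  fin_cases i <;>
    simp [circPt, Complex.orthonormalBasisOneI_repr_apply, Complex.exp_mul_I, ← Complex.ofReal_cos, ← Complex.ofReal_sin,
      Complex.mul_re, Complex.mul_im, Complex.add_re, Complex.add_im]

/-- As `A → 0⁺`, the normalized equilibrium measures with density proportional to
`exp(-(2/A²)(β|v|⁴/4 - α|v|²/2))` converge weakly (i.e. tested against every bounded
continuous function) to the uniform probability measure on the circle `{|v| = √(α/β)}`. -/
theorem stmt19 (α β : ℝ) (hα : 0 < α) (hβ : 0 < β)
    (g : EuclideanSpace ℝ (Fin 2) → ℝ) (hg : Continuous g) (hgb : ∃ Cb, ∀ v, |g v| ≤ Cb) :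
    Filter.Tendsto
      (fun A : ℝ =>
        (∫ v : EuclideanSpace ℝ (Fin 2),
            Real.exp (-(2 / A ^ 2) * (β * ‖v‖ ^ 4 / 4 - α * ‖v‖ ^ 2 / 2)))⁻¹ *
          ∫ v : EuclideanSpace ℝ (Fin 2),
            g v * Real.exp (-(2 / A ^ 2) * (β * ‖v‖ ^ 4 / 4 - α * ‖v‖ ^ 2 / 2)))
      (nhdsWithin 0 (Set.Ioi 0))
      (nhds ((2 * π)⁻¹ * ∫ θ in (0 : ℝ)..(2 * π), g (circPt α β θ))) := by
  obtain ⟨C, hC⟩ := hgb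
  set e := Complex.orthonormalBasisOneI.repr with he
  set G : ℂ → ℝ := fun z => g (e z) with hG
  have hGcont : Continuous G := hg.comp e.continuous
  have hGb : ∀ z, |G z| ≤ C := fun z => hC _
  have transfer : ∀ f : EuclideanSpace ℝ (Fin 2) → ℝ,
      (∫ z : ℂ, f (e z)) = ∫ v, f v := fun f =>
    Complex.orthonormalBasisOneI.measurePreserving_repr.integral_comp
      e.toMeasurableEquiv.measurableEmbedding f
  -- limit value identification
  have hlim : Hf G (Real.sqrt (α / β)) = (2 * π)⁻¹ * ∫ θ in (0 : ℝ)..(2 * π), g (circPt α β θ) := by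
    unfold Hf
    congr 1
    apply intervalIntegral.integral_congr
    intro θ _
    show g (e ((Real.sqrt (α / β) : ℂ) * Complex.exp (θ * Complex.I))) = g (circPt α β θ)
    rw [circPt_eq α β θ]
  -- composition A ↦ A²/2
  have hcomp : Tendsto (fun A : ℝ => A ^ 2 / 2) (𝓝[>] (0:ℝ)) (𝓝[>] (0:ℝ)) := by
    rw [tendsto_nhdsWithin_iff]
    constructor
    · have : Tendsto (fun A : ℝ => A ^ 2 / 2) (𝓝 0) (𝓝 0) := by
        have := ((continuous_pow 2).div_const 2).tendsto (0:ℝ)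
        simpa using this
      exact this.mono_left nhdsWithin_le_nhds
    · filter_upwards [self_mem_nhdsWithin] with A hA
      have : (0:ℝ) < A := hA
      exact mem_Ioi.2 (by positivity)
  have hmain := (main_eps hα hβ hGcont hGb).comp hcomp
  rw [hlim] at hmain
  apply hmain.congr'
  filter_upwards [self_mem_nhdsWithin] with A hA
  have hApos : (0:ℝ) < A := hA
  set ε := A ^ 2 / 2 with hε
  have hεpos : 0 < ε := by positivity
  set k := Real.exp (α ^ 2 / (4 * β) / ε) with hk
  have hkne : k ≠ 0 := Real.exp_ne_zero _
  have hpt : ∀ z : ℂ, Real.exp (-(2 / A ^ 2) * (β * ‖e z‖ ^ 4 / 4 - α * ‖e z‖ ^ 2 / 2))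
      = k * wf α β ε z := by
    intro z
    rw [e.norm_map, hk]
    unfold wf
    rw [← Real.exp_add]
    congr 1
    unfold qf
    have hA2 : (A:ℝ) ^ 2 ≠ 0 := by positivity
    field_simp
    ring
  have hden : (∫ v : EuclideanSpace ℝ (Fin 2),
      Real.exp (-(2 / A ^ 2) * (β * ‖v‖ ^ 4 / 4 - α * ‖v‖ ^ 2 / 2)))
      = k * ∫ z : ℂ, wf α β ε z := by
    refine Eq.trans (transfer (fun v =>
      Real.exp (-(2 / A ^ 2) * (β * ‖v‖ ^ 4 / 4 - α * ‖v‖ ^ 2 / 2)))).symm ?_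
    simp_rw [hpt]
    exact MeasureTheory.integral_const_mul _ _
  have hnum : (∫ v : EuclideanSpace ℝ (Fin 2),
      g v * Real.exp (-(2 / A ^ 2) * (β * ‖v‖ ^ 4 / 4 - α * ‖v‖ ^ 2 / 2)))
      = k * ∫ z : ℂ, G z * wf α β ε z := by
    refine Eq.trans (transfer (fun v =>
      g v * Real.exp (-(2 / A ^ 2) * (β * ‖v‖ ^ 4 / 4 - α * ‖v‖ ^ 2 / 2)))).symm ?_
    have : ∀ z : ℂ, g (e z) * Real.exp (-(2 / A ^ 2) * (β * ‖e z‖ ^ 4 / 4 - α * ‖e z‖ ^ 2 / 2))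
        = k * (G z * wf α β ε z) := by
      intro z; rw [hpt z, hG]; ring
    simp_rw [this]
    exact MeasureTheory.integral_const_mul _ _
  show (∫ z : ℂ, wf α β ε z)⁻¹ * (∫ z : ℂ, G z * wf α β ε z) = _
  rw [hnum, hden, mul_inv, mul_comm k⁻¹ _, mul_assoc, ← mul_assoc k⁻¹, inv_mul_cancel₀ hkne,
    one_mul]
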